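/- arXiv:1006.5149 — 4 statements merged into one kernel-verified Lean document; each statement's English description precedes it below -/
import Mathlib

section
/- Let Ω ⊆ ℝ³ be an open set with coordinates (x,y,z), let Λ be a nonzero real constant, and let u : Ω → ℝ be a C³ function satisfying the SU(∞) Toda equation u_xx + u_yy + (e^u)_zz = 0 on Ω. Define V : Ω → ℝ by −4ΛV = z·u_z − 2, i.e. V = (2 − z·u_z)/(4Λ). Then V satisfies the linearised SU(∞) Toda equation V_xx + V_yy + (V·e^u)_zz = 0 on Ω. -/
open Filter Topology

/-- Partial derivative in the `x` direction of a function on `ℝ × ℝ × ℝ`. -/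
noncomputable def pdx (f : ℝ × ℝ × ℝ → ℝ) (p : ℝ × ℝ × ℝ) : ℝ :=
  fderiv ℝ f p (1, 0, 0)

/-- Partial derivative in the `y` direction of a function on `ℝ × ℝ × ℝ`. -/
noncomputable def pdy (f : ℝ × ℝ × ℝ → ℝ) (p : ℝ × ℝ × ℝ) : ℝ :=
  fderiv ℝ f p (0, 1, 0)

/-- Partial derivative in the `z` direction of a function on `ℝ × ℝ × ℝ`. -/
noncomputable def pdz (f : ℝ × ℝ × ℝ → ℝ) (p : ℝ × ℝ × ℝ) : ℝ :=
  fderiv ℝ f p (0, 0, 1)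

lemma pdx_eq (f : ℝ × ℝ × ℝ → ℝ) : pdx f = fun p => fderiv ℝ f p (1, 0, 0) := rfl
lemma pdy_eq (f : ℝ × ℝ × ℝ → ℝ) : pdy f = fun p => fderiv ℝ f p (0, 1, 0) := rfl
lemma pdz_eq (f : ℝ × ℝ × ℝ → ℝ) : pdz f = fun p => fderiv ℝ f p (0, 0, 1) := rfl

lemma contDiffAt_pd {f : ℝ × ℝ × ℝ → ℝ} {p : ℝ × ℝ × ℝ} {m n : WithTop ℕ∞}
    (hf : ContDiffAt ℝ n f p) (h : m + 1 ≤ n) (v : ℝ × ℝ × ℝ) :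
    ContDiffAt ℝ m (fun q => fderiv ℝ f q v) p :=
  (hf.fderiv_right h).clm_apply contDiffAt_const

lemma pd_eval {f : ℝ × ℝ × ℝ → ℝ} {p : ℝ × ℝ × ℝ}
    (hf : DifferentiableAt ℝ (fderiv ℝ f) p) (v w : ℝ × ℝ × ℝ) :
    fderiv ℝ (fun q => fderiv ℝ f q v) p w = fderiv ℝ (fderiv ℝ f) p w v := by
  have h : fderiv ℝ (fun q => (fderiv ℝ f q) ((fun _ => v) q)) p
      = (fderiv ℝ f p).comp (fderiv ℝ (fun _ : ℝ × ℝ × ℝ => v) p)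
        + (fderiv ℝ (fderiv ℝ f) p).flip v :=
    fderiv_clm_apply hf (differentiableAt_const v)
  calc fderiv ℝ (fun q => fderiv ℝ f q v) p w
      = ((fderiv ℝ f p).comp (fderiv ℝ (fun _ : ℝ × ℝ × ℝ => v) p)
        + (fderiv ℝ (fderiv ℝ f) p).flip v) w := by rw [← h]
    _ = _ := by simp

lemma pd_swap {f : ℝ × ℝ × ℝ → ℝ} {p : ℝ × ℝ × ℝ} (hf : ContDiffAt ℝ 2 f p)
    (v w : ℝ × ℝ × ℝ) :
    fderiv ℝ (fun q => fderiv ℝ f q v) p w = fderiv ℝ (fun q => fderiv ℝ f q w) p v := by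
  have hd : DifferentiableAt ℝ (fderiv ℝ f) p :=
    (hf.fderiv_right (m := 1) (by norm_num)).differentiableAt one_ne_zero
  rw [pd_eval hd v w, pd_eval hd w v, hf.isSymmSndFDerivAt (by simp) w v]

lemma key {a h : ℝ × ℝ × ℝ → ℝ} {c : ℝ} {q : ℝ × ℝ × ℝ} (ha : DifferentiableAt ℝ a q)
    (hh : DifferentiableAt ℝ h q) (v : ℝ × ℝ × ℝ) :
    fderiv ℝ (fun r => (a r - r.2.2 * h r) * c) q v
      = (fderiv ℝ a q v - (v.2.2 * h q + q.2.2 * fderiv ℝ h q v)) * c := by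
  have hz : HasFDerivAt (fun r : ℝ × ℝ × ℝ => r.2.2)
      ((ContinuousLinearMap.snd ℝ ℝ ℝ).comp (ContinuousLinearMap.snd ℝ ℝ (ℝ × ℝ))) q :=
    ((ContinuousLinearMap.snd ℝ ℝ ℝ).comp (ContinuousLinearMap.snd ℝ ℝ (ℝ × ℝ))).hasFDerivAt
  have H := ((ha.hasFDerivAt.sub (hz.mul hh.hasFDerivAt)).mul_const c).fderiv
  rw [show (fun r => (a r - r.2.2 * h r) * c) = fun y => (a - (fun r : ℝ × ℝ × ℝ => r.2.2) * h) y * c from rfl, H]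
  simp
  ring

lemma key2 {Ω : Set (ℝ × ℝ × ℝ)} (hΩ : IsOpen Ω) {p : ℝ × ℝ × ℝ} (hp : p ∈ Ω)
    {W a h : ℝ × ℝ × ℝ → ℝ} {c : ℝ}
    (hW : ∀ q ∈ Ω, W q = (a q - q.2.2 * h q) * c)
    (ha : DifferentiableAt ℝ a p) (hh : DifferentiableAt ℝ h p) (v : ℝ × ℝ × ℝ) :
    fderiv ℝ W p v
      = (fderiv ℝ a p v - (v.2.2 * h p + p.2.2 * fderiv ℝ h p v)) * c := by
  have he : W =ᶠ[𝓝 p] fun r => (a r - r.2.2 * h r) * c :=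
    Filter.eventually_of_mem (hΩ.mem_nhds hp) hW
  rw [he.fderiv_eq]
  exact key ha hh v

lemma third_swap {Ω : Set (ℝ × ℝ × ℝ)} (hΩ : IsOpen Ω) {p : ℝ × ℝ × ℝ} (hp : p ∈ Ω)
    {u : ℝ × ℝ × ℝ → ℝ} (hu3 : ∀ q ∈ Ω, ContDiffAt ℝ 3 u q) (v : ℝ × ℝ × ℝ) :
    fderiv ℝ (fun q => fderiv ℝ (fun r => fderiv ℝ u r (0, 0, 1)) q v) p v
      = fderiv ℝ (fun q => fderiv ℝ (fun r => fderiv ℝ u r v) q v) p (0, 0, 1) := by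
  have he : (fun q => fderiv ℝ (fun r => fderiv ℝ u r (0, 0, 1)) q v)
      =ᶠ[𝓝 p] fun q => fderiv ℝ (fun r => fderiv ℝ u r v) q (0, 0, 1) := by
    refine Filter.eventually_of_mem (hΩ.mem_nhds hp) fun q hq => ?_
    exact pd_swap ((hu3 q hq).of_le (by norm_num)) (0, 0, 1) v
  rw [he.fderiv_eq]
  exact pd_swap (contDiffAt_pd (hu3 p hp) (by norm_num) v) (0, 0, 1) v

/-- If `u` is a `C³` solution of the `SU(∞)` Toda equation
`u_xx + u_yy + (e^u)_zz = 0` on an open set `Ω ⊆ ℝ³`, and `V` is defined by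
`−4ΛV = z·u_z − 2` (with `Λ ≠ 0`), then `V` satisfies the linearised Toda
equation `V_xx + V_yy + (V·e^u)_zz = 0` on `Ω`. -/
theorem linearised_toda_from_toda
    (Ω : Set (ℝ × ℝ × ℝ)) (hΩ : IsOpen Ω)
    (Λ : ℝ) (hΛ : Λ ≠ 0)
    (u : ℝ × ℝ × ℝ → ℝ) (hu : ContDiffOn ℝ 3 u Ω)
    (htoda : ∀ p ∈ Ω,
      pdx (pdx u) p + pdy (pdy u) p
        + pdz (pdz (fun q => Real.exp (u q))) p = 0)
    (V : ℝ × ℝ × ℝ → ℝ)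
    (hV : ∀ p : ℝ × ℝ × ℝ, V p = (2 - p.2.2 * pdz u p) / (4 * Λ)) :
    ∀ p ∈ Ω,
      pdx (pdx V) p + pdy (pdy V) p
        + pdz (pdz (fun q => V q * Real.exp (u q))) p = 0 := by
  intro p hp
  have hu3 : ∀ q ∈ Ω, ContDiffAt ℝ 3 u q := fun q hq => (hu q hq).contDiffAt (hΩ.mem_nhds hq)
  have hF3 : ∀ q ∈ Ω, ContDiffAt ℝ 3 (fun r => Real.exp (u r)) q := fun q hq => (hu3 q hq).exp
  simp only [pdx_eq, pdy_eq, pdz_eq] at htoda hV ⊢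
  set c : ℝ := (4 * Λ)⁻¹ with hcdef
  have hpd_diff : ∀ (f : ℝ × ℝ × ℝ → ℝ) (q : ℝ × ℝ × ℝ) (v : ℝ × ℝ × ℝ),
      ContDiffAt ℝ 2 f q → DifferentiableAt ℝ (fun r => fderiv ℝ f r v) q :=
    fun f q v hf => (contDiffAt_pd (m := 1) hf (by norm_num) v).differentiableAt one_ne_zero
  have hVOn : ∀ q ∈ Ω, V q = ((2 : ℝ) - q.2.2 * fderiv ℝ u q (0, 0, 1)) * c := by
    intro q _
    rw [hV q, div_eq_mul_inv]
  -- first x derivative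
  have hVx : ∀ q ∈ Ω, fderiv ℝ V q (1, 0, 0)
      = ((0 : ℝ) - q.2.2 * fderiv ℝ (fun r => fderiv ℝ u r (0, 0, 1)) q (1, 0, 0)) * c := by
    intro q hq
    rw [key2 hΩ hq (a := fun _ => (2 : ℝ)) (h := fun r => fderiv ℝ u r (0, 0, 1)) hVOn
        (differentiableAt_const 2) (hpd_diff u q _ ((hu3 q hq).of_le (by norm_num))) (1, 0, 0)]
    simp
  -- second x derivative
  have hVxx : fderiv ℝ (fun q => fderiv ℝ V q (1, 0, 0)) p (1, 0, 0)
      = -(p.2.2 * fderiv ℝ (fun q => fderiv ℝ (fun r => fderiv ℝ u r (0, 0, 1)) q (1, 0, 0))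
          p (1, 0, 0) * c) := by
    rw [key2 hΩ hp (a := fun _ => (0 : ℝ))
        (h := fun q => fderiv ℝ (fun r => fderiv ℝ u r (0, 0, 1)) q (1, 0, 0)) hVx
        (differentiableAt_const 0)
        (hpd_diff _ p _ (contDiffAt_pd (m := 2) (hu3 p hp) (by norm_num) _)) (1, 0, 0)]
    simp
  -- first y derivative
  have hVy : ∀ q ∈ Ω, fderiv ℝ V q (0, 1, 0)
      = ((0 : ℝ) - q.2.2 * fderiv ℝ (fun r => fderiv ℝ u r (0, 0, 1)) q (0, 1, 0)) * c := by
    intro q hq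
    rw [key2 hΩ hq (a := fun _ => (2 : ℝ)) (h := fun r => fderiv ℝ u r (0, 0, 1)) hVOn
        (differentiableAt_const 2) (hpd_diff u q _ ((hu3 q hq).of_le (by norm_num))) (0, 1, 0)]
    simp
  have hVyy : fderiv ℝ (fun q => fderiv ℝ V q (0, 1, 0)) p (0, 1, 0)
      = -(p.2.2 * fderiv ℝ (fun q => fderiv ℝ (fun r => fderiv ℝ u r (0, 0, 1)) q (0, 1, 0))
          p (0, 1, 0) * c) := by
    rw [key2 hΩ hp (a := fun _ => (0 : ℝ))
        (h := fun q => fderiv ℝ (fun r => fderiv ℝ u r (0, 0, 1)) q (0, 1, 0)) hVy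
        (differentiableAt_const 0)
        (hpd_diff _ p _ (contDiffAt_pd (m := 2) (hu3 p hp) (by norm_num) _)) (0, 1, 0)]
    simp
  -- z part
  have hFzOn : ∀ q ∈ Ω, fderiv ℝ (fun r => Real.exp (u r)) q (0, 0, 1)
      = Real.exp (u q) * fderiv ℝ u q (0, 0, 1) := by
    intro q hq
    rw [fderiv_exp ((hu3 q hq).differentiableAt (by norm_num))]
    simp
  have hWOn : ∀ q ∈ Ω, V q * Real.exp (u q)
      = ((fun r => 2 * Real.exp (u r)) q
          - q.2.2 * fderiv ℝ (fun r => Real.exp (u r)) q (0, 0, 1)) * c := by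
    intro q hq
    rw [hVOn q hq, hFzOn q hq]
    ring
  have hWz : ∀ q ∈ Ω, fderiv ℝ (fun r => V r * Real.exp (u r)) q (0, 0, 1)
      = (fderiv ℝ (fun r => Real.exp (u r)) q (0, 0, 1)
          - q.2.2 * fderiv ℝ (fun r => fderiv ℝ (fun s => Real.exp (u s)) r (0, 0, 1))
              q (0, 0, 1)) * c := by
    intro q hq
    rw [key2 hΩ hq (a := fun r => 2 * Real.exp (u r))
        (h := fun r => fderiv ℝ (fun s => Real.exp (u s)) r (0, 0, 1)) hWOn
        (((hF3 q hq).differentiableAt (by norm_num)).const_mul 2)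
        (hpd_diff _ q _ ((hF3 q hq).of_le (by norm_num))) (0, 0, 1)]
    have h2 : fderiv ℝ (fun r => 2 * Real.exp (u r)) q
        = (2 : ℝ) • fderiv ℝ (fun r => Real.exp (u r)) q :=
      fderiv_const_mul ((hF3 q hq).differentiableAt (by norm_num)) 2
    rw [h2]
    simp only [ContinuousLinearMap.smul_apply, smul_eq_mul]
    ring
  have hWzz : fderiv ℝ (fun q => fderiv ℝ (fun r => V r * Real.exp (u r)) q (0, 0, 1)) p (0, 0, 1)
      = -(p.2.2 * fderiv ℝ
          (fun q => fderiv ℝ (fun r => fderiv ℝ (fun s => Real.exp (u s)) r (0, 0, 1)) q (0, 0, 1))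
          p (0, 0, 1) * c) := by
    rw [key2 hΩ hp (a := fun r => fderiv ℝ (fun s => Real.exp (u s)) r (0, 0, 1))
        (h := fun q => fderiv ℝ (fun r => fderiv ℝ (fun s => Real.exp (u s)) r (0, 0, 1)) q (0, 0, 1))
        hWz
        (hpd_diff _ p _ ((hF3 p hp).of_le (by norm_num)))
        (hpd_diff _ p _ (contDiffAt_pd (m := 2) (hF3 p hp) (by norm_num) _)) (0, 0, 1)]
    simp
  -- swaps
  have hswx := third_swap hΩ hp hu3 (1, 0, 0)
  have hswy := third_swap hΩ hp hu3 (0, 1, 0)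
  -- derivative of the Toda equation
  have hA : DifferentiableAt ℝ
      (fun q => fderiv ℝ (fun r => fderiv ℝ u r (1, 0, 0)) q (1, 0, 0)) p :=
    hpd_diff _ p _ (contDiffAt_pd (m := 2) (hu3 p hp) (by norm_num) _)
  have hB : DifferentiableAt ℝ
      (fun q => fderiv ℝ (fun r => fderiv ℝ u r (0, 1, 0)) q (0, 1, 0)) p :=
    hpd_diff _ p _ (contDiffAt_pd (m := 2) (hu3 p hp) (by norm_num) _)
  have hC : DifferentiableAt ℝ
      (fun q => fderiv ℝ (fun r => fderiv ℝ (fun s => Real.exp (u s)) r (0, 0, 1)) q (0, 0, 1)) p :=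
    hpd_diff _ p _ (contDiffAt_pd (m := 2) (hF3 p hp) (by norm_num) _)
  have hT0 : (fun q => fderiv ℝ (fun r => fderiv ℝ u r (1, 0, 0)) q (1, 0, 0)
      + fderiv ℝ (fun r => fderiv ℝ u r (0, 1, 0)) q (0, 1, 0)
      + fderiv ℝ (fun r => fderiv ℝ (fun s => Real.exp (u s)) r (0, 0, 1)) q (0, 0, 1))
      =ᶠ[𝓝 p] (fun _ => (0 : ℝ)) :=
    Filter.eventually_of_mem (hΩ.mem_nhds hp) htoda
  have hsum : fderiv ℝ (fun q => fderiv ℝ (fun r => fderiv ℝ u r (1, 0, 0)) q (1, 0, 0)) p (0, 0, 1)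
      + fderiv ℝ (fun q => fderiv ℝ (fun r => fderiv ℝ u r (0, 1, 0)) q (0, 1, 0)) p (0, 0, 1)
      + fderiv ℝ (fun q => fderiv ℝ (fun r => fderiv ℝ (fun s => Real.exp (u s)) r (0, 0, 1))
          q (0, 0, 1)) p (0, 0, 1) = 0 := by
    have h5 : fderiv ℝ _ p = fderiv ℝ (fun _ : ℝ × ℝ × ℝ => (0:ℝ)) p := hT0.fderiv_eq
    have h6 : fderiv ℝ (fun q => fderiv ℝ (fun r => fderiv ℝ u r (1, 0, 0)) q (1, 0, 0)
        + fderiv ℝ (fun r => fderiv ℝ u r (0, 1, 0)) q (0, 1, 0)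
        + fderiv ℝ (fun r => fderiv ℝ (fun s => Real.exp (u s)) r (0, 0, 1)) q (0, 0, 1))
        p (0, 0, 1) = 0 := by rw [h5]; simp
    rw [fderiv_fun_add (f := fun q => fderiv ℝ (fun r => fderiv ℝ u r (1, 0, 0)) q (1, 0, 0)
        + fderiv ℝ (fun r => fderiv ℝ u r (0, 1, 0)) q (0, 1, 0)) (hA.add hB) hC, fderiv_fun_add hA hB] at h6
    simpa using h6
  rw [hVxx, hVyy, hWzz, hswx, hswy]
  linear_combination (-(p.2.2 * c)) * hsum
end

section
/- Let Λ > 0. A differentiable function U : ℝ → ℝ with U(τ) > 0 for all τ ∈ ℝ satisfies the ordinary differential equation d/dτ (U(τ)^{−1}) = 2·U(τ)^{−1}·(Λ·U(τ)^{−1} − 1) for all τ ∈ ℝ if and only if there exists a constant c ≥ 0 such that U(τ) = Λ·(1 + c²·e^{2τ}) for all τ ∈ ℝ. -/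
/-- For `Λ > 0`, a positive differentiable function `U : ℝ → ℝ` satisfies
`d/dτ (U⁻¹) = 2·U⁻¹·(Λ·U⁻¹ − 1)` on all of `ℝ` if and only if
`U(τ) = Λ·(1 + c²·e^{2τ})` for some constant `c ≥ 0`. -/
theorem ode_solution_theta_zero
    (Λ : ℝ) (hΛ : 0 < Λ)
    (U : ℝ → ℝ) (hU : Differentiable ℝ U) (hUpos : ∀ τ, 0 < U τ) :
    (∀ τ : ℝ, deriv (fun t => (U t)⁻¹) τ = 2 * (U τ)⁻¹ * (Λ * (U τ)⁻¹ - 1)) ↔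
      ∃ c : ℝ, 0 ≤ c ∧ ∀ τ : ℝ, U τ = Λ * (1 + c ^ 2 * Real.exp (2 * τ)) := by
  constructor
  · intro hode
    -- The ODE for U⁻¹ is equivalent to the linear ODE U' = 2U - 2Λ.
    have hlin : ∀ τ, deriv U τ = 2 * U τ - 2 * Λ := by
      intro τ
      have hne : U τ ≠ 0 := (hUpos τ).ne'
      have hinv : HasDerivAt (fun t => (U t)⁻¹) (-(deriv U τ) / U τ ^ 2) τ :=
        ((hU τ).hasDerivAt).inv hne
      have h1 : -(deriv U τ) / U τ ^ 2 = 2 * (U τ)⁻¹ * (Λ * (U τ)⁻¹ - 1) := by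
        rw [← hinv.deriv]; exact hode τ
      field_simp at h1
      have h2 : (deriv U τ - (2 * U τ - 2 * Λ)) * (U τ * U τ) = 0 := by
        linear_combination (-(U τ * U τ)) * h1
      rcases mul_eq_zero.mp h2 with h3 | h3
      · linarith
      · exact absurd h3 (mul_pos (hUpos τ) (hUpos τ)).ne'
    -- (U τ - Λ) e^{-2τ} is constant
    set f : ℝ → ℝ := fun t => (U t - Λ) * Real.exp (-(2 * t)) with hf
    have hfd : ∀ t, HasDerivAt f ((deriv U t) * Real.exp (-(2 * t))
        + (U t - Λ) * (Real.exp (-(2 * t)) * (-2))) t := by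
      intro t
      have h1 : HasDerivAt (fun s => U s - Λ) (deriv U t) t :=
        ((hU t).hasDerivAt).sub_const Λ
      have h2 : HasDerivAt (fun s : ℝ => Real.exp (-(2 * s))) (Real.exp (-(2 * t)) * (-2)) t := by
        have : HasDerivAt (fun s : ℝ => -(2 * s)) (-2) t := by
          exact (((hasDerivAt_id t).const_mul (2 : ℝ)).neg).congr_deriv (by norm_num)
        exact (Real.hasDerivAt_exp (-(2 * t))).comp t this
      exact h1.mul h2
    have hconst : ∀ t, f t = f 0 := by
      intro t
      apply is_const_of_deriv_eq_zero
      · intro s; exact (hfd s).differentiableAt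
      · intro s
        rw [(hfd s).deriv, hlin s]
        ring
    set k : ℝ := U 0 - Λ with hk
    have hUform : ∀ τ, U τ = Λ + k * Real.exp (2 * τ) := by
      intro τ
      have h := hconst τ
      simp only [hf] at h
      have hexp : Real.exp (-(2 * τ)) ≠ 0 := Real.exp_ne_zero _
      have h0 : (U τ - Λ) * Real.exp (-(2 * τ)) = k := by
        simpa [hk] using h
      have : U τ - Λ = k * Real.exp (2 * τ) := by
        have := congrArg (fun x => x * Real.exp (2 * τ)) h0
        simpa [mul_assoc, ← Real.exp_add] using this
      linarith
    have hknn : 0 ≤ k := by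
      by_contra hneg
      push_neg at hneg
      set τ₀ : ℝ := Real.log (Λ / (-k)) / 2 with hτ₀
      have hpos : 0 < Λ / (-k) := div_pos hΛ (neg_pos.mpr hneg)
      have hexp : Real.exp (2 * τ₀) = Λ / (-k) := by
        rw [hτ₀]
        rw [mul_div_cancel₀ _ (two_ne_zero)]
        exact Real.exp_log hpos
      have hkne : (-k) ≠ 0 := (neg_pos.mpr hneg).ne'
      have hUτ := hUpos τ₀
      rw [hUform τ₀, hexp] at hUτ
      have hzero : k * (Λ / -k) = -Λ := by
        rw [mul_div_assoc', div_neg, mul_comm k Λ, mul_div_assoc, div_self (neg_ne_zero.mp hkne), mul_one]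
      linarith
    refine ⟨Real.sqrt (k / Λ), Real.sqrt_nonneg _, fun τ => ?_⟩
    have hsq : Real.sqrt (k / Λ) ^ 2 = k / Λ :=
      Real.sq_sqrt (div_nonneg hknn hΛ.le)
    rw [hsq, hUform τ]
    field_simp
  · rintro ⟨c, hc, hUeq⟩ τ
    have hfun : (fun t => (U t)⁻¹) = fun t => (Λ * (1 + c ^ 2 * Real.exp (2 * t)))⁻¹ := by
      funext t; rw [hUeq t]
    have hbase : ∀ t : ℝ, (0:ℝ) < Λ * (1 + c ^ 2 * Real.exp (2 * t)) := by
      intro t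
      have : (0:ℝ) < 1 + c ^ 2 * Real.exp (2 * t) := by positivity
      positivity
    have hd : HasDerivAt (fun t => Λ * (1 + c ^ 2 * Real.exp (2 * t)))
        (Λ * (c ^ 2 * (Real.exp (2 * τ) * 2))) τ := by
      have h2 : HasDerivAt (fun s : ℝ => Real.exp (2 * s)) (Real.exp (2 * τ) * 2) τ := by
        have : HasDerivAt (fun s : ℝ => (2 : ℝ) * s) 2 τ := by
          simpa using (hasDerivAt_id τ).const_mul (2 : ℝ)
        exact (Real.hasDerivAt_exp (2 * τ)).comp τ this
      simpa [mul_assoc] using (((h2.const_mul (c ^ 2)).const_add 1).const_mul Λ)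
    have hinv : HasDerivAt (fun t => (Λ * (1 + c ^ 2 * Real.exp (2 * t)))⁻¹)
        (-(Λ * (c ^ 2 * (Real.exp (2 * τ) * 2))) / (Λ * (1 + c ^ 2 * Real.exp (2 * τ))) ^ 2) τ :=
      hd.inv (hbase τ).ne'
    rw [hfun, hinv.deriv, hUeq τ]
    have h1 : (0:ℝ) < 1 + c ^ 2 * Real.exp (2 * τ) := by positivity
    field_simp
    ring
end

section
/- Let m ∈ ℝ and l ∈ ℝ with l ≠ 0. For (s,r) ∈ ℝ² with r ≠ 0, define R = e^{−s/l}, T = l·(r−m)·e^{s/l}, and V(r) = r²/l² + (1 − m/r)². Then: (i) m/R + T/l = r·e^{s/l}; (ii) V(r) > 0; and (iii) for all (a,b) ∈ ℝ², writing dR(a,b) = −(1/l)·e^{−s/l}·a and dT(a,b) = (r−m)·e^{s/l}·a + l·e^{s/l}·b for the differentials of R and T applied to the tangent vector (a,b), one has (r·e^{s/l})²·(dR(a,b))² + (r·e^{s/l})^{−2}·(dT(a,b))² = V(r)·(a + (l·(r−m)/(V(r)·r²))·b)² + V(r)^{−1}·b². That is, the coordinate change (s,r) ↦ (R,T) transforms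 the (R,T)-block (m/R + T/l)²·dR² + (m/R + T/l)^{−2}·dT² of the Euclidean Kastor–Traschen metric with 𝒰 = m/R into the static form V·dψ² + V^{−1}·dr², where dψ = ds + (l·(r−m)/(V·r²))·dr. -/
/-- The coordinate change `R = e^{−s/l}`, `T = l(r−m)e^{s/l}` puts the
`(R,T)`-block of the Euclidean Kastor–Traschen metric with `𝒰 = m/R` into the
static form `V dψ² + V⁻¹ dr²`, where `V(r) = r²/l² + (1 − m/r)²` and
`dψ = ds + (l(r−m)/(Vr²)) dr`. -/
theorem kastor_traschen_static_form
    (m l : ℝ) (hl : l ≠ 0) (s r : ℝ) (hr : r ≠ 0)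
    (R T V : ℝ)
    (hR : R = Real.exp (-s / l))
    (hT : T = l * (r - m) * Real.exp (s / l))
    (hV : V = r ^ 2 / l ^ 2 + (1 - m / r) ^ 2) :
    (m / R + T / l = r * Real.exp (s / l)) ∧
    (0 < V) ∧
    (∀ a b : ℝ,
      (r * Real.exp (s / l)) ^ 2 * (-(1 / l) * Real.exp (-s / l) * a) ^ 2
        + ((r * Real.exp (s / l)) ^ 2)⁻¹
          * ((r - m) * Real.exp (s / l) * a + l * Real.exp (s / l) * b) ^ 2
      = V * (a + (l * (r - m) / (V * r ^ 2)) * b) ^ 2 + V⁻¹ * b ^ 2) := by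
  have hexp : Real.exp (s / l) ≠ 0 := Real.exp_ne_zero _
  have hneg : Real.exp (-s / l) = (Real.exp (s / l))⁻¹ := by
    rw [← Real.exp_neg]; ring_nf
  have hVpos : 0 < V := by
    rw [hV]
    have h1 : 0 < r ^ 2 / l ^ 2 := by positivity
    nlinarith [sq_nonneg (1 - m / r)]
  refine ⟨?_, hVpos, ?_⟩
  · rw [hR, hT, hneg]
    field_simp
    ring
  · intro a b
    have hVne : V ≠ 0 := ne_of_gt hVpos
    rw [hV] at hVne ⊢
    rw [hneg]
    field_simp
    ring
end

section
/- Let Ω ⊆ ℝ³ be open, φ : Ω → ℝ a C¹ function, and l ∈ ℝ with l ≠ 0. Define T : Ω × ℝ → ℝ by T(x,τ) = l·φ(x)/√2 − l·e^{−√2·τ/l} and 𝒰 : Ω → ℝ by 𝒰(x) = −φ(x)/√2. Then: (i) 𝒰(x) + T(x,τ)/l = −e^{−√2·τ/l} for all (x,τ); and (ii) for every point (x,τ) ∈ Ω × ℝ and every tangent vector (v,t) ∈ ℝ³ × ℝ, writing dT(v,t) = (l/√2)·Dφ_x(v) + √2·e^{−√2·τ/l}·t for the differential of T, one has (𝒰(x)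 + T(x,τ)/l)²·|v|² + (𝒰(x) + T(x,τ)/l)^{−2}·(dT(v,t))² = e^{−2√2·τ/l}·|v|² + 2·(t + (l/2)·e^{√2·τ/l}·Dφ_x(v))². That is, the pullback of the Kastor–Traschen metric (𝒰 + T/l)²(dx² + dy² + dz²) + (𝒰 + T/l)^{−2}dT² under the map (x,τ) ↦ (x, T(x,τ)) equals the metric e^{−2√2·τ/l}(dx² + dy² + dz²) + 2(dτ + (l/2)e^{√2·τ/l}dφ)². -/
open Real

/-- The coordinate change `T = lφ/√2 − l·e^{−√2τ/l}`, `𝒰 = −φ/√2` puts the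
metric `e^{−2√2τ/l}(dx²+dy²+dz²) + 2(dτ + (l/2)e^{√2τ/l}dφ)²` into the
Euclidean Kastor–Traschen form `(𝒰 + T/l)²(dx²+dy²+dz²) + (𝒰 + T/l)^{−2}dT²`. -/
theorem kastor_traschen_coordinate_change
    (Ω : Set (EuclideanSpace ℝ (Fin 3))) (hΩ : IsOpen Ω)
    (φ : EuclideanSpace ℝ (Fin 3) → ℝ) (hφ : ContDiffOn ℝ 1 φ Ω)
    (l : ℝ) (hl : l ≠ 0)
    (T : EuclideanSpace ℝ (Fin 3) → ℝ → ℝ)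
    (hT : ∀ x τ, T x τ = l * φ x / Real.sqrt 2 - l * Real.exp (-(Real.sqrt 2) * τ / l))
    (𝒰 : EuclideanSpace ℝ (Fin 3) → ℝ)
    (h𝒰 : ∀ x, 𝒰 x = -φ x / Real.sqrt 2) :
    (∀ x τ, 𝒰 x + T x τ / l = -Real.exp (-(Real.sqrt 2) * τ / l)) ∧
    (∀ x ∈ Ω, ∀ τ : ℝ, ∀ v : EuclideanSpace ℝ (Fin 3), ∀ t : ℝ,
      (𝒰 x + T x τ / l) ^ 2 * ‖v‖ ^ 2
        + ((𝒰 x + T x τ / l) ^ 2)⁻¹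
          * ((l / Real.sqrt 2) * fderiv ℝ φ x v
              + Real.sqrt 2 * Real.exp (-(Real.sqrt 2) * τ / l) * t) ^ 2
      = Real.exp (-2 * Real.sqrt 2 * τ / l) * ‖v‖ ^ 2
        + 2 * (t + (l / 2) * Real.exp (Real.sqrt 2 * τ / l) * fderiv ℝ φ x v) ^ 2) := by
  have hs : Real.sqrt 2 ≠ 0 := by positivity
  have hs2 : Real.sqrt 2 * Real.sqrt 2 = 2 := Real.mul_self_sqrt (by norm_num)
  have key : ∀ x τ, 𝒰 x + T x τ / l = -Real.exp (-(Real.sqrt 2) * τ / l) := by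
    intro x τ
    rw [hT, h𝒰]
    field_simp
    ring
  refine ⟨key, fun x _ τ v t => ?_⟩
  rw [key]
  set D := fderiv ℝ φ x v
  have hE : Real.exp (-(Real.sqrt 2) * τ / l) ≠ 0 := Real.exp_ne_zero _
  have h1 : Real.exp (-2 * Real.sqrt 2 * τ / l)
      = Real.exp (-(Real.sqrt 2) * τ / l) * Real.exp (-(Real.sqrt 2) * τ / l) := by
    rw [← Real.exp_add]; ring_nf
  have h2 : Real.exp (Real.sqrt 2 * τ / l) * Real.exp (-(Real.sqrt 2) * τ / l) = 1 := by
    rw [← Real.exp_add]; ring_nf; exact Real.exp_zero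
  set E := Real.exp (-(Real.sqrt 2) * τ / l)
  set F := Real.exp (Real.sqrt 2 * τ / l)
  have hF : F = E⁻¹ := eq_inv_of_mul_eq_one_left h2
  rw [h1, hF]
  field_simp
  have hp2 : Real.sqrt 2 ^ 2 = 2 := Real.sq_sqrt (by norm_num)
  have hp4 : Real.sqrt 2 ^ 4 = 4 := by
    have : Real.sqrt 2 ^ 4 = (Real.sqrt 2 ^ 2) ^ 2 := by ring
    rw [this, hp2]; norm_num
  ring_nf
  rw [hp2, hp4]
  ring
end
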